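/- Let θ : X → X be a measurable map preserving a probability measure μ, and let φ : ℕ × X → ℝ be a subadditive integrable cocycle with φ̄(x) = lim φ(t,x)/t given by the Kingman theorem. Then for every t ≥ 1 and μ-a.e. x, the θ^t-Birkhoff-average limit h_t(x) := lim_{k→∞} (1/k) ∑_{j=0}^{k−1} [ (1/t) φ(t, θ^{jt}(x)) − φ̄(x) ] exists and satisfies h_t(x) ≥ 0. -/

import Mathlib

open MeasureTheory Filter Finset

section AuxBirkhoff

set_option linter.unusedSectionVars false

variable {X : Type*} [MeasurableSpace X]

/-- Running maximum of Birkhoff sums, starting from `S₀ = 0`. -/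
noncomputable def maxS (T : X → X) (g : X → ℝ) : ℕ → X → ℝ
  | 0 => fun _ => 0
  | (N+1) => fun x => max (maxS T g N x) (birkhoffSum T g (N+1) x)

lemma maxS_nonneg (T : X → X) (g : X → ℝ) (N : ℕ) (x : X) : 0 ≤ maxS T g N x := by
  induction N with
  | zero => exact le_refl 0
  | succ N ih => exact le_trans ih (le_max_left _ _)

lemma maxS_mono (T : X → X) (g : X → ℝ) {N M : ℕ} (h : N ≤ M) (x : X) :
    maxS T g N x ≤ maxS T g M x := by
  induction M with
  | zero => simp_all [maxS]
  | succ M ih =>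
    rcases Nat.lt_or_ge N (M+1) with h' | h'
    · exact le_trans (ih (Nat.lt_succ_iff.mp h')) (le_max_left _ _)
    · have : N = M + 1 := le_antisymm h h'
      simp [this]

lemma birkhoffSum_le_maxS (T : X → X) (g : X → ℝ) {n N : ℕ} (h : n ≤ N) (x : X) :
    birkhoffSum T g n x ≤ maxS T g N x := by
  rcases n with _ | m
  · simpa [birkhoffSum_zero] using maxS_nonneg T g N x
  · calc birkhoffSum T g (m+1) x ≤ maxS T g (m+1) x := le_max_right _ _
      _ ≤ maxS T g N x := maxS_mono T g h x

lemma maxS_pos_iff (T : X → X) (g : X → ℝ) (N : ℕ) (x : X) :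
    0 < maxS T g N x ↔ ∃ n, n ≤ N ∧ 0 < birkhoffSum T g n x := by
  constructor
  · intro h
    induction N with
    | zero => simp [maxS] at h
    | succ N ih =>
      rcases lt_max_iff.mp h with h' | h'
      · obtain ⟨n, hn, hp⟩ := ih h'
        exact ⟨n, hn.trans (Nat.le_succ N), hp⟩
      · exact ⟨N+1, le_refl _, h'⟩
  · rintro ⟨n, hn, hp⟩
    exact lt_of_lt_of_le hp (birkhoffSum_le_maxS T g hn x)

lemma maxS_measurable {T : X → X} {g : X → ℝ} (hT : Measurable T) (hg : Measurable g) (N : ℕ) :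
    Measurable (maxS T g N) := by
  induction N with
  | zero => simpa [maxS] using measurable_const
  | succ N ih =>
    have hb : Measurable (birkhoffSum T g (N+1)) := by
      unfold birkhoffSum
      exact Finset.measurable_sum _ (fun k _ => hg.comp (hT.iterate k))
    exact ih.max hb

lemma birkhoffSum_integrable {μ : Measure X} {T : X → X} {g : X → ℝ}
    (hT : MeasurePreserving T μ μ) (hg : Integrable g μ) (n : ℕ) :
    Integrable (birkhoffSum T g n) μ := by
  unfold birkhoffSum
  apply integrable_finset_sum
  intro k _
  exact (hT.iterate k).integrable_comp hg.aestronglyMeasurable |>.mpr hg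

set_option linter.unusedSectionVars false

lemma maxS_integrable {μ : Measure X} {T : X → X} {g : X → ℝ}
    (hT : MeasurePreserving T μ μ) (hgm : Measurable g) (hg : Integrable g μ) (N : ℕ) :
    Integrable (maxS T g N) μ := by
  induction N with
  | zero => simpa [maxS] using integrable_const (0:ℝ)
  | succ N ih =>
    have hb := birkhoffSum_integrable hT hg (N+1)
    have : Integrable (fun x => max (maxS T g N x) (birkhoffSum T g (N+1) x)) μ :=
      ih.sup hb
    exact this

lemma maxS_key (T : X → X) (g : X → ℝ) (N : ℕ) (x : X) :
    maxS T g N x ≤ max 0 (g x + maxS T g N (T x)) := by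
  induction N with
  | zero => exact le_max_left _ _
  | succ N ih =>
    refine max_le ?_ ?_
    · exact le_trans ih (max_le_max (le_refl 0)
        (add_le_add le_rfl (maxS_mono T g (Nat.le_succ N) (T x))))
    · rw [birkhoffSum_succ']
      refine le_trans ?_ (le_max_right 0 _)
      exact add_le_add le_rfl (birkhoffSum_le_maxS T g (Nat.le_succ N) (T x))

lemma maxS_diff_le (T : X → X) (g : X → ℝ) (N : ℕ) (x : X) :
    maxS T g N x - maxS T g N (T x) ≤
      Set.indicator {y | 0 < maxS T g N y} g x := by
  by_cases h : 0 < maxS T g N x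
  · rw [Set.indicator_of_mem (show x ∈ {y | 0 < maxS T g N y} from h) g]
    have key := maxS_key T g N x
    have : max 0 (g x + maxS T g N (T x)) = g x + maxS T g N (T x) := by
      rcases max_cases 0 (g x + maxS T g N (T x)) with ⟨h1, _⟩ | ⟨h1, _⟩
      · exfalso; exact absurd (lt_of_lt_of_le h (key.trans_eq h1)) (lt_irrefl 0)
      · exact h1
    linarith [key.trans_eq this]
  · rw [Set.indicator_of_notMem (show x ∉ {y | 0 < maxS T g N y} from h) g]
    push_neg at h
    have h0 := maxS_nonneg T g N x
    have h1 := maxS_nonneg T g N (T x)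
    linarith

/-- Garsia's maximal ergodic lemma. -/
lemma maximal_ergodic (μ : Measure X) [IsProbabilityMeasure μ] (T : X → X)
    (hT : MeasurePreserving T μ μ) (g : X → ℝ) (hgm : Measurable g) (hgi : Integrable g μ) :
    0 ≤ ∫ x, Set.indicator {y | ∃ n, 0 < birkhoffSum T g n y} g x ∂μ := by
  have hAm : ∀ N, MeasurableSet {y | 0 < maxS T g N y} := fun N =>
    measurableSet_lt measurable_const (maxS_measurable hT.measurable hgm N)
  -- step 1: 0 ≤ ∫ indicator A_N g for each N
  have step1 : ∀ N : ℕ, 0 ≤ ∫ x, Set.indicator {y | 0 < maxS T g N y} g x ∂μ := by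
    intro N
    have hMi := maxS_integrable hT hgm hgi N
    have hMcomp : Integrable (fun x => maxS T g N (T x)) μ :=
      (hT.integrable_comp hMi.aestronglyMeasurable).mpr hMi
    have hint : ∫ x, maxS T g N (T x) ∂μ = ∫ x, maxS T g N x ∂μ := by
      have h1 : ∫ x, maxS T g N (T x) ∂μ = ∫ y, maxS T g N y ∂(Measure.map T μ) :=
        (integral_map hT.measurable.aemeasurable
          (by rw [hT.map_eq]; exact hMi.aestronglyMeasurable)).symm
      rw [h1, hT.map_eq]
    have hind : Integrable (Set.indicator {y | 0 < maxS T g N y} g) μ :=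
      hgi.indicator (hAm N)
    have hle : ∀ x, maxS T g N x - maxS T g N (T x) ≤
        Set.indicator {y | 0 < maxS T g N y} g x := maxS_diff_le T g N
    have hmono : ∫ x, (maxS T g N x - maxS T g N (T x)) ∂μ ≤
        ∫ x, Set.indicator {y | 0 < maxS T g N y} g x ∂μ :=
      integral_mono (hMi.sub hMcomp) hind hle
    rwa [integral_sub hMi hMcomp, hint, sub_self] at hmono
  -- step 2: limit N → ∞
  have hconv : ∀ x, Tendsto (fun N => Set.indicator {y | 0 < maxS T g N y} g x) atTop
      (nhds (Set.indicator {y | ∃ n, 0 < birkhoffSum T g n y} g x)) := by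
    intro x
    by_cases h : ∃ n, 0 < birkhoffSum T g n x
    · obtain ⟨n, hn⟩ := h
      rw [Set.indicator_of_mem (show x ∈ {y | ∃ n, 0 < birkhoffSum T g n y} from ⟨n, hn⟩) g]
      apply tendsto_const_nhds.congr'
      filter_upwards [eventually_ge_atTop n] with N hN
      rw [Set.indicator_of_mem]
      exact (maxS_pos_iff T g N x).mpr ⟨n, hN, hn⟩
    · rw [Set.indicator_of_notMem (show x ∉ {y | ∃ n, 0 < birkhoffSum T g n y} from h) g]
      apply tendsto_const_nhds.congr (fun N => ?_)
      rw [Set.indicator_of_notMem]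
      intro hx
      obtain ⟨n, _, hp⟩ := (maxS_pos_iff T g N x).mp hx
      exact h ⟨n, hp⟩
  have hmeas2 : ∀ N : ℕ, AEStronglyMeasurable
      (fun x => Set.indicator {y | 0 < maxS T g N y} g x) μ :=
    fun N => (hgi.indicator (hAm N)).aestronglyMeasurable
  have hbound : ∀ N : ℕ, ∀ᵐ x ∂μ,
      ‖Set.indicator {y | 0 < maxS T g N y} g x‖ ≤ |g x| := by
    intro N
    filter_upwards with x
    simpa [Real.norm_eq_abs] using norm_indicator_le_norm_self g x (s := {y | 0 < maxS T g N y})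
  have hlim : Tendsto (fun N => ∫ x, Set.indicator {y | 0 < maxS T g N y} g x ∂μ) atTop
      (nhds (∫ x, Set.indicator {y | ∃ n, 0 < birkhoffSum T g n y} g x ∂μ)) := by
    refine tendsto_integral_of_dominated_convergence (fun x => |g x|) hmeas2 hgi.abs hbound ?_
    filter_upwards with x using hconv x
  exact ge_of_tendsto hlim (Eventually.of_forall step1)

lemma invariant_iterate {T : X → X} {E : Set X} (hE : T ⁻¹' E = E) :
    ∀ k x, (x ∈ E ↔ T^[k] x ∈ E) := by
  intro k
  induction k with
  | zero => simp
  | succ k ih =>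
    intro x
    rw [Function.iterate_succ_apply]
    have hx : x ∈ E ↔ T x ∈ E := by
      constructor
      · intro h; rw [← hE] at h; exact h
      · intro h; rw [← hE]; exact h
    exact hx.trans (ih (T x))

lemma birkhoffSum_indicator_eq {T : X → X} {E : Set X} (hE : T ⁻¹' E = E) (g : X → ℝ)
    (n : ℕ) (x : X) :
    birkhoffSum T (Set.indicator E g) n x =
      Set.indicator E (birkhoffSum T g n) x := by
  by_cases hx : x ∈ E
  · rw [Set.indicator_of_mem hx]
    unfold birkhoffSum
    refine Finset.sum_congr rfl (fun k _ => ?_)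
    exact Set.indicator_of_mem ((invariant_iterate hE k x).mp hx) g
  · rw [Set.indicator_of_notMem hx]
    unfold birkhoffSum
    refine Finset.sum_eq_zero (fun k _ => ?_)
    exact Set.indicator_of_notMem (fun h => hx ((invariant_iterate hE k x).mpr h)) g

/-- Maximal ergodic lemma applied to an invariant set on which Birkhoff sums
get positive. -/
lemma maximal_on_invariant (μ : Measure X) [IsProbabilityMeasure μ] (T : X → X)
    (hT : MeasurePreserving T μ μ) (g : X → ℝ) (hgm : Measurable g) (hgi : Integrable g μ)
    {E : Set X} (hEm : MeasurableSet E) (hE : T ⁻¹' E = E)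
    (hpos : ∀ x ∈ E, ∃ n, 0 < birkhoffSum T g n x) :
    0 ≤ ∫ x, Set.indicator E g x ∂μ := by
  have h := maximal_ergodic μ T hT (Set.indicator E g) (hgm.indicator hEm)
    (hgi.indicator hEm)
  have hset : {y | ∃ n, 0 < birkhoffSum T (Set.indicator E g) n y} = E := by
    ext x
    simp only [Set.mem_setOf_eq, birkhoffSum_indicator_eq hE]
    constructor
    · rintro ⟨n, hn⟩
      by_contra hx
      rw [Set.indicator_of_notMem hx] at hn
      exact lt_irrefl 0 hn
    · intro hx
      obtain ⟨n, hn⟩ := hpos x hx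
      exact ⟨n, by rwa [Set.indicator_of_mem hx]⟩
  rw [hset] at h
  have heq : Set.indicator E (Set.indicator E g) = Set.indicator E g := by
    rw [Set.indicator_indicator, Set.inter_self]
  rwa [heq] at h

/-- Points where Birkhoff sums of `g` are unbounded above. -/
def unbddSet (T : X → X) (g : X → ℝ) : Set X :=
  {x | ∀ C : ℕ, ∃ n, (C : ℝ) < birkhoffSum T g n x}

lemma mem_unbddSet_iff {T : X → X} {g : X → ℝ} {x : X} :
    x ∈ unbddSet T g ↔ ∀ C : ℝ, ∃ n, C < birkhoffSum T g n x := by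
  constructor
  · intro h C
    obtain ⟨m, hm⟩ := exists_nat_gt C
    obtain ⟨n, hn⟩ := h m
    exact ⟨n, hm.trans hn⟩
  · intro h C
    exact h C

lemma unbddSet_measurable {T : X → X} {g : X → ℝ} (hT : Measurable T) (hg : Measurable g) :
    MeasurableSet (unbddSet T g) := by
  have : unbddSet T g = ⋂ C : ℕ, ⋃ n : ℕ, {x | (C : ℝ) < birkhoffSum T g n x} := by
    ext x; simp [unbddSet, Set.mem_iInter, Set.mem_iUnion]
  rw [this]
  refine MeasurableSet.iInter (fun C => MeasurableSet.iUnion (fun n => ?_))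
  have hb : Measurable (birkhoffSum T g n) := by
    unfold birkhoffSum
    exact Finset.measurable_sum _ (fun k _ => hg.comp (hT.iterate k))
  exact measurableSet_lt measurable_const hb

lemma unbddSet_invariant (T : X → X) (g : X → ℝ) :
    T ⁻¹' (unbddSet T g) = unbddSet T g := by
  ext x
  simp only [Set.mem_preimage]
  rw [mem_unbddSet_iff, mem_unbddSet_iff]
  constructor
  · intro h C
    obtain ⟨n, hn⟩ := h (C - g x)
    refine ⟨n + 1, ?_⟩
    rw [birkhoffSum_succ']
    linarith
  · intro h C
    obtain ⟨n, hn⟩ := h (max C 0 + |g x|)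
    have hn1 : 1 ≤ n := by
      rcases Nat.eq_zero_or_pos n with h0 | h1
      · exfalso
        rw [h0, birkhoffSum_zero] at hn
        have : (0:ℝ) ≤ max C 0 + |g x| := add_nonneg (le_max_right C 0) (abs_nonneg _)
        linarith
      · exact h1
    obtain ⟨m, rfl⟩ := Nat.exists_eq_add_of_le hn1
    rw [show 1 + m = m + 1 from Nat.add_comm 1 m, birkhoffSum_succ'] at hn
    refine ⟨m, ?_⟩
    have h1 : |g x| - g x ≥ 0 := by
      have := neg_abs_le (g x); linarith [le_abs_self (g x)]
    have h2 : C ≤ max C 0 := le_max_left C 0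
    linarith

lemma integral_indicator_unbddSet_nonneg (μ : Measure X) [IsProbabilityMeasure μ]
    (T : X → X) (hT : MeasurePreserving T μ μ) (g : X → ℝ)
    (hgm : Measurable g) (hgi : Integrable g μ)
    {E : Set X} (hEm : MeasurableSet E) (hE : T ⁻¹' E = E) (hsub : E ⊆ unbddSet T g) :
    0 ≤ ∫ x, Set.indicator E g x ∂μ := by
  refine maximal_on_invariant μ T hT g hgm hgi hEm hE (fun x hx => ?_)
  exact mem_unbddSet_iff.mp (hsub hx) 0

lemma birkhoffSum_sub_const (T : X → X) (g : X → ℝ) (c : ℝ) (n : ℕ) (x : X) :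
    birkhoffSum T (fun y => g y - c) n x = birkhoffSum T g n x - n * c := by
  unfold birkhoffSum
  rw [Finset.sum_sub_distrib, Finset.sum_const, Finset.card_range, nsmul_eq_mul]

lemma birkhoffSum_const_sub (T : X → X) (g : X → ℝ) (c : ℝ) (n : ℕ) (x : X) :
    birkhoffSum T (fun y => c - g y) n x = n * c - birkhoffSum T g n x := by
  unfold birkhoffSum
  rw [Finset.sum_sub_distrib, Finset.sum_const, Finset.card_range, nsmul_eq_mul]

/-- The intersection bad set for a pair `α < β` has measure zero. -/
lemma bad_pair_null (μ : Measure X) [IsProbabilityMeasure μ] (T : X → X)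
    (hT : MeasurePreserving T μ μ) (g : X → ℝ) (hgm : Measurable g) (hgi : Integrable g μ)
    {α β : ℝ} (hab : α < β) :
    μ (unbddSet T (fun y => g y - β) ∩ unbddSet T (fun y => α - g y)) = 0 := by
  set D := unbddSet T (fun y => g y - β) ∩ unbddSet T (fun y => α - g y) with hD
  have hm1 : Measurable (fun y => g y - β) := hgm.sub measurable_const
  have hm2 : Measurable (fun y => α - g y) := measurable_const.sub hgm
  have hi1 : Integrable (fun y => g y - β) μ := hgi.sub (integrable_const β)
  have hi2 : Integrable (fun y => α - g y) μ := (integrable_const α).sub hgi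
  have hDm : MeasurableSet D :=
    (unbddSet_measurable hT.measurable hm1).inter (unbddSet_measurable hT.measurable hm2)
  have hDinv : T ⁻¹' D = D := by
    rw [hD, Set.preimage_inter, unbddSet_invariant, unbddSet_invariant]
  have h1 : 0 ≤ ∫ x, Set.indicator D (fun y => g y - β) x ∂μ :=
    integral_indicator_unbddSet_nonneg μ T hT _ hm1 hi1 hDm hDinv Set.inter_subset_left
  have h2 : 0 ≤ ∫ x, Set.indicator D (fun y => α - g y) x ∂μ :=
    integral_indicator_unbddSet_nonneg μ T hT _ hm2 hi2 hDm hDinv Set.inter_subset_right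
  rw [integral_indicator hDm] at h1 h2
  have e1 : ∫ x in D, (g x - β) ∂μ = (∫ x in D, g x ∂μ) - (μ D).toReal * β := by
    rw [integral_sub hgi.restrict (integrable_const β), setIntegral_const, smul_eq_mul]; rfl
  have e2 : ∫ x in D, (α - g x) ∂μ = (μ D).toReal * α - ∫ x in D, g x ∂μ := by
    rw [integral_sub (integrable_const α) hgi.restrict, setIntegral_const, smul_eq_mul]; rfl
  rw [e1] at h1; rw [e2] at h2
  have : (μ D).toReal * β ≤ (μ D).toReal * α := by linarith
  have hzero : (μ D).toReal = 0 := by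
    nlinarith [ENNReal.toReal_nonneg (a := μ D)]
  have hfin : μ D ≠ ⊤ := measure_ne_top μ D
  exact (ENNReal.toReal_eq_zero_iff _).mp hzero |>.resolve_right hfin

/-- Measure bound for the unboundedness set of `g - β`, `β > 0`. -/
lemma unbdd_measure_bound (μ : Measure X) [IsProbabilityMeasure μ] (T : X → X)
    (hT : MeasurePreserving T μ μ) (g : X → ℝ) (hgm : Measurable g) (hgi : Integrable g μ)
    {β : ℝ} (hβ : 0 < β) :
    (μ (unbddSet T (fun y => g y - β))).toReal ≤ (∫ x, |g x| ∂μ) / β := by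
  set E := unbddSet T (fun y => g y - β) with hE
  have hm1 : Measurable (fun y => g y - β) := hgm.sub measurable_const
  have hi1 : Integrable (fun y => g y - β) μ := hgi.sub (integrable_const β)
  have hEm : MeasurableSet E := unbddSet_measurable hT.measurable hm1
  have hEinv : T ⁻¹' E = E := unbddSet_invariant T _
  have h1 : 0 ≤ ∫ x, Set.indicator E (fun y => g y - β) x ∂μ :=
    integral_indicator_unbddSet_nonneg μ T hT _ hm1 hi1 hEm hEinv (subset_refl _)
  rw [integral_indicator hEm] at h1
  have e1 : ∫ x in E, (g x - β) ∂μ = (∫ x in E, g x ∂μ) - (μ E).toReal * β := by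
    rw [integral_sub hgi.restrict (integrable_const β), setIntegral_const, smul_eq_mul]; rfl
  rw [e1] at h1
  have h2 : ∫ x in E, g x ∂μ ≤ ∫ x in E, |g x| ∂μ :=
    integral_mono hgi.restrict hgi.abs.restrict (fun x => le_abs_self _)
  have h3 : ∫ x in E, |g x| ∂μ ≤ ∫ x, |g x| ∂μ :=
    setIntegral_le_integral hgi.abs (Eventually.of_forall (fun x => abs_nonneg _))
  rw [div_eq_inv_mul]
  have : (μ E).toReal * β ≤ ∫ x, |g x| ∂μ := by linarith
  calc (μ E).toReal = ((μ E).toReal * β) * β⁻¹ := by field_simp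
    _ ≤ (∫ x, |g x| ∂μ) * β⁻¹ := by
        apply mul_le_mul_of_nonneg_right this (inv_nonneg.mpr hβ.le)
    _ = β⁻¹ * ∫ x, |g x| ∂μ := mul_comm _ _

lemma birkhoffSum_neg' (T : X → X) (g : X → ℝ) (n : ℕ) (x : X) :
    birkhoffSum T (fun y => -g y) n x = -birkhoffSum T g n x := by
  unfold birkhoffSum
  rw [← Finset.sum_neg_distrib]

/-- Pointwise a.e. existence of the limit of Birkhoff averages. -/
theorem birkhoff_exists (μ : Measure X) [IsProbabilityMeasure μ] (T : X → X)
    (hT : MeasurePreserving T μ μ) (g : X → ℝ) (hgm : Measurable g) (hgi : Integrable g μ) :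
    ∀ᵐ x ∂μ, ∃ c : ℝ, Tendsto (fun n : ℕ => (1/(n:ℝ)) * birkhoffSum T g n x)
      atTop (nhds c) := by
  set I := ∫ x, |g x| ∂μ with hI
  have hIdiv : Tendsto (fun C : ℕ => I / (C + 1 : ℝ)) atTop (nhds 0) := by
    have h1 : Tendsto (fun n : ℕ => I / (n : ℝ)) atTop (nhds 0) :=
      tendsto_const_div_atTop_nhds_zero_nat I
    have h2 := h1.comp (tendsto_add_atTop_nat 1)
    refine h2.congr (fun C => ?_)
    simp [Function.comp]
  have null_of_bounds : ∀ (S : Set X), (∀ C : ℕ, (μ S).toReal ≤ I / (C + 1 : ℝ)) → μ S = 0 := by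
    intro S hS
    have h0 : (μ S).toReal ≤ 0 :=
      le_of_tendsto_of_tendsto' tendsto_const_nhds hIdiv hS
    have := le_antisymm h0 ENNReal.toReal_nonneg
    exact ((ENNReal.toReal_eq_zero_iff _).mp this).resolve_right (measure_ne_top μ S)
  -- three bad sets
  have hbad1 : μ (⋂ C : ℕ, unbddSet T (fun y => g y - (C + 1 : ℝ))) = 0 := by
    apply null_of_bounds
    intro C
    refine le_trans ?_ (unbdd_measure_bound μ T hT g hgm hgi
      (β := (C + 1 : ℝ)) (by positivity))
    exact ENNReal.toReal_mono (measure_ne_top μ _)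
      (measure_mono (Set.iInter_subset _ C))
  have hbad2 : μ (⋂ C : ℕ, unbddSet T (fun y => -g y - (C + 1 : ℝ))) = 0 := by
    apply null_of_bounds
    intro C
    have hb := unbdd_measure_bound μ T hT (fun y => -g y) hgm.neg hgi.neg
      (β := (C + 1 : ℝ)) (by positivity)
    simp only [abs_neg] at hb
    refine le_trans ?_ hb
    exact ENNReal.toReal_mono (measure_ne_top μ _)
      (measure_mono (Set.iInter_subset _ C))
  have hbad3 : μ (⋃ p : ℚ × ℚ, (if (p.1 : ℝ) < (p.2 : ℝ) then
      unbddSet T (fun y => g y - (p.2 : ℝ)) ∩ unbddSet T (fun y => (p.1 : ℝ) - g y)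
      else ∅)) = 0 := by
    refine measure_iUnion_null (fun p => ?_)
    by_cases h : (p.1 : ℝ) < (p.2 : ℝ)
    · rw [if_pos h]
      exact bad_pair_null μ T hT g hgm hgi h
    · rw [if_neg h]; simp
  filter_upwards [measure_eq_zero_iff_ae_notMem.mp hbad1, measure_eq_zero_iff_ae_notMem.mp hbad2,
    measure_eq_zero_iff_ae_notMem.mp hbad3] with x hx1 hx2 hx3
  set a : ℕ → ℝ := fun n => (1/(n:ℝ)) * birkhoffSum T g n x with ha
  have hSa : ∀ n : ℕ, 1 ≤ n → birkhoffSum T g n x = n * a n := by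
    intro n hn
    have hn0 : (n:ℝ) ≠ 0 := Nat.cast_ne_zero.mpr (by omega)
    simp only [ha]; field_simp
  -- upper boundedness
  have hub : ∃ U : ℝ, ∀ n : ℕ, 1 ≤ n → a n ≤ U := by
    rw [Set.mem_iInter] at hx1
    push_neg at hx1
    obtain ⟨C, hC⟩ := hx1
    simp only [unbddSet, Set.mem_setOf_eq, not_forall, not_exists, not_lt] at hC
    obtain ⟨C', hC'⟩ := hC
    refine ⟨|(C':ℝ)| + (C + 1 : ℝ), fun n hn => ?_⟩
    have hn0 : (0:ℝ) < n := by exact_mod_cast Nat.lt_of_lt_of_le Nat.zero_lt_one hn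
    have h1 := hC' n
    rw [birkhoffSum_sub_const] at h1
    have h2 : birkhoffSum T g n x ≤ (C':ℝ) + n * (C + 1 : ℝ) := by linarith
    have h3 : birkhoffSum T g n x ≤ n * (|(C':ℝ)| + (C + 1 : ℝ)) := by
      have hn1 : (1:ℝ) ≤ n := by exact_mod_cast hn
      nlinarith [le_abs_self (C':ℝ), abs_nonneg (C':ℝ)]
    calc a n = (1/(n:ℝ)) * birkhoffSum T g n x := rfl
      _ ≤ (1/(n:ℝ)) * (n * (|(C':ℝ)| + (C + 1 : ℝ))) := by
          apply mul_le_mul_of_nonneg_left h3 (by positivity)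
      _ = |(C':ℝ)| + (C + 1 : ℝ) := by
          field_simp
          try ring
  -- lower boundedness
  have hlb : ∃ V : ℝ, ∀ n : ℕ, 1 ≤ n → V ≤ a n := by
    rw [Set.mem_iInter] at hx2
    push_neg at hx2
    obtain ⟨C, hC⟩ := hx2
    simp only [unbddSet, Set.mem_setOf_eq, not_forall, not_exists, not_lt] at hC
    obtain ⟨C', hC'⟩ := hC
    refine ⟨-(|(C':ℝ)| + (C + 1 : ℝ)), fun n hn => ?_⟩
    have hn0 : (0:ℝ) < n := by exact_mod_cast Nat.lt_of_lt_of_le Nat.zero_lt_one hn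
    have h1 := hC' n
    rw [birkhoffSum_sub_const, birkhoffSum_neg'] at h1
    have h3 : -(n * (|(C':ℝ)| + (C + 1 : ℝ))) ≤ birkhoffSum T g n x := by
      have hn1 : (1:ℝ) ≤ n := by exact_mod_cast hn
      nlinarith [le_abs_self (C':ℝ), abs_nonneg (C':ℝ)]
    calc -(|(C':ℝ)| + (C + 1 : ℝ)) = (1/(n:ℝ)) * (-(n * (|(C':ℝ)| + (C + 1 : ℝ)))) := by
          field_simp
          try ring
      _ ≤ (1/(n:ℝ)) * birkhoffSum T g n x := by
          apply mul_le_mul_of_nonneg_left h3 (by positivity)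
      _ = a n := rfl
  obtain ⟨U, hU⟩ := hub
  obtain ⟨V, hV⟩ := hlb
  have hbddU : IsBoundedUnder (· ≤ ·) atTop a :=
    ⟨U, eventually_map.mpr (by filter_upwards [eventually_ge_atTop 1] with n hn using hU n hn)⟩
  have hbddL : IsBoundedUnder (· ≥ ·) atTop a :=
    ⟨V, eventually_map.mpr (by filter_upwards [eventually_ge_atTop 1] with n hn using hV n hn)⟩
  set L := limsup a atTop with hL
  set l := liminf a atTop with hl
  have hlL : l ≤ L := liminf_le_limsup hbddU hbddL
  -- frequently above β'' implies membership in unbddSet of g - β for β < β''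
  have freq_mem_upper : ∀ β β'' : ℝ, β < β'' → (∃ᶠ n in atTop, β'' < a n) →
      x ∈ unbddSet T (fun y => g y - β) := by
    intro β β'' hb hfreq C
    obtain ⟨n₀, hn₀⟩ := exists_nat_gt ((C : ℝ) / (β'' - β))
    obtain ⟨n, ⟨hfn, hn1, hn2⟩⟩ :=
      (hfreq.and_eventually ((eventually_ge_atTop 1).and (eventually_ge_atTop n₀))).exists
    refine ⟨n, ?_⟩
    rw [birkhoffSum_sub_const, hSa n hn1]
    have hb' : 0 < β'' - β := by linarith
    have h1 : (C:ℝ) < n₀ * (β'' - β) := by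
      rw [div_lt_iff₀ hb'] at hn₀; linarith
    have h2 : (n₀ : ℝ) ≤ n := by exact_mod_cast hn2
    have h3 : (n:ℝ) * (β'' - β) ≥ n₀ * (β'' - β) :=
      mul_le_mul_of_nonneg_right h2 hb'.le
    have hn0 : (0:ℝ) < n := by exact_mod_cast Nat.lt_of_lt_of_le Nat.zero_lt_one hn1
    nlinarith
  have freq_mem_lower : ∀ α α'' : ℝ, α'' < α → (∃ᶠ n in atTop, a n < α'') →
      x ∈ unbddSet T (fun y => α - g y) := by
    intro α α'' hb hfreq C
    obtain ⟨n₀, hn₀⟩ := exists_nat_gt ((C : ℝ) / (α - α''))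
    obtain ⟨n, ⟨hfn, hn1, hn2⟩⟩ :=
      (hfreq.and_eventually ((eventually_ge_atTop 1).and (eventually_ge_atTop n₀))).exists
    refine ⟨n, ?_⟩
    rw [birkhoffSum_const_sub, hSa n hn1]
    have hb' : 0 < α - α'' := by linarith
    have h1 : (C:ℝ) < n₀ * (α - α'') := by
      rw [div_lt_iff₀ hb'] at hn₀; linarith
    have h2 : (n₀ : ℝ) ≤ n := by exact_mod_cast hn2
    have h3 : (n:ℝ) * (α - α'') ≥ n₀ * (α - α'') :=
      mul_le_mul_of_nonneg_right h2 hb'.le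
    have hn0 : (0:ℝ) < n := by exact_mod_cast Nat.lt_of_lt_of_le Nat.zero_lt_one hn1
    nlinarith
  have hLl : L ≤ l := by
    by_contra hlt
    push_neg at hlt
    obtain ⟨q, hq1, hq2⟩ := exists_rat_btwn hlt
    obtain ⟨q', hq'1, hq'2⟩ := exists_rat_btwn hq2
    -- l < q < q' < L
    have hmem1 : x ∈ unbddSet T (fun y => g y - (q' : ℝ)) := by
      refine freq_mem_upper _ (((q':ℝ) + L)/2) (by linarith) ?_
      exact frequently_lt_of_lt_limsup hbddL.isCoboundedUnder_le (by rw [← hL]; linarith)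
    have hmem2 : x ∈ unbddSet T (fun y => (q : ℝ) - g y) := by
      refine freq_mem_lower _ ((l + (q:ℝ))/2) (by linarith) ?_
      exact frequently_lt_of_liminf_lt hbddU.isCoboundedUnder_ge (by rw [← hl]; linarith)
    apply hx3
    refine Set.mem_iUnion.mpr ⟨(q, q'), ?_⟩
    rw [if_pos (show ((q:ℝ) < (q':ℝ)) from hq'1)]
    exact ⟨hmem1, hmem2⟩
  have heq : l = L := le_antisymm hlL hLl
  exact ⟨L, tendsto_of_liminf_eq_limsup heq rfl hbddU hbddL⟩


end AuxBirkhoff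

/-- For a subadditive integrable cocycle `φ` over a measure-preserving map `θ`
with Kingman limit `φ̄`, for every `t ≥ 1` and a.e. `x` the Birkhoff average under
`θ^t` of `(1/t) φ(t,·) − φ̄` converges and its limit is nonnegative. -/
theorem sampled_average_dominates_kingman
    {X : Type*} [MeasurableSpace X] (μ : Measure X) [IsProbabilityMeasure μ]
    (θ : X → X) (hθ : MeasurePreserving θ μ μ)
    (φ : ℕ → X → ℝ) (hmeas : ∀ t, Measurable (φ t))
    (hsub : ∀ k₁ k₂ : ℕ, 1 ≤ k₁ → 1 ≤ k₂ →
      ∀ᵐ x ∂μ, φ (k₁ + k₂) x ≤ φ k₁ x + φ k₂ (θ^[k₁] x))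
    (hint : ∀ t : ℕ, 1 ≤ t → Integrable (φ t) μ)
    (φbar : X → ℝ) (hφbarInt : Integrable φbar μ)
    (hφbar : ∀ᵐ x ∂μ, Tendsto (fun t : ℕ => φ t x / t) atTop (nhds (φbar x))) :
    ∀ t : ℕ, 1 ≤ t →
      ∀ᵐ x ∂μ, ∃ h : ℝ, 0 ≤ h ∧
        Tendsto (fun k : ℕ => (1 / (k : ℝ)) *
            ∑ j ∈ Finset.range k, (φ t (θ^[j * t] x) / t - φbar x))
          atTop (nhds h) := by
  intro t ht
  set T : X → X := θ^[t] with hTdef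
  have hT : MeasurePreserving T μ μ := hθ.iterate t
  set g : X → ℝ := fun x => φ t x / t with hgdef
  have hgm : Measurable g := (hmeas t).div_const _
  have hgi : Integrable g μ := (hint t ht).div_const _
  have hiter : ∀ (j : ℕ) (x : X), T^[j] x = θ^[j * t] x := by
    intro j x
    rw [hTdef, ← Function.iterate_mul, Nat.mul_comm]
  have hBsum : ∀ (k : ℕ) (x : X),
      birkhoffSum T g k x = ∑ j ∈ Finset.range k, φ t (θ^[j * t] x) / t := by
    intro k x
    unfold birkhoffSum
    exact Finset.sum_congr rfl (fun j _ => by rw [hiter])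
  have hB := birkhoff_exists μ T hT g hgm hgi
  -- subadditivity chain
  have hchain : ∀ k : ℕ, 1 ≤ k →
      ∀ᵐ x ∂μ, φ (k * t) x ≤ ∑ j ∈ Finset.range k, φ t (θ^[j * t] x) := by
    intro k hk
    induction k with
    | zero => omega
    | succ k ih =>
      rcases Nat.eq_zero_or_pos k with rfl | hk1
      · filter_upwards with x
        simp [Finset.sum_range_one]
      · filter_upwards [ih hk1, hsub (k * t) t (Nat.mul_pos hk1 ht) ht] with x h1 h2
        have : (k + 1) * t = k * t + t := by ring
        rw [this, Finset.sum_range_succ]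
        calc φ (k * t + t) x ≤ φ (k * t) x + φ t (θ^[k * t] x) := h2
          _ ≤ (∑ j ∈ Finset.range k, φ t (θ^[j * t] x)) + φ t (θ^[k * t] x) := by linarith
  have hchain' : ∀ᵐ x ∂μ, ∀ k : ℕ, 1 ≤ k →
      φ (k * t) x ≤ ∑ j ∈ Finset.range k, φ t (θ^[j * t] x) := by
    rw [ae_all_iff]
    intro k
    rcases Nat.eq_zero_or_pos k with rfl | hk
    · filter_upwards with x h; omega
    · filter_upwards [hchain k hk] with x hx _ using hx
  filter_upwards [hB, hchain', hφbar] with x hx hcx hlx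
  obtain ⟨c, hc⟩ := hx
  have ht0 : (0:ℝ) < t := by exact_mod_cast ht
  -- the averages rewritten
  have hrew : ∀ k : ℕ, 1 ≤ k →
      (1 / (k : ℝ)) * ∑ j ∈ Finset.range k, (φ t (θ^[j * t] x) / t - φbar x)
        = (1 / (k : ℝ)) * birkhoffSum T g k x - φbar x := by
    intro k hk
    have hk0 : ((k:ℝ)) ≠ 0 := Nat.cast_ne_zero.mpr (by omega)
    rw [hBsum, Finset.sum_sub_distrib, Finset.sum_const, Finset.card_range, nsmul_eq_mul,
      mul_sub]
    congr 1
    field_simp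
  have htend : Tendsto (fun k : ℕ => (1 / (k : ℝ)) *
      ∑ j ∈ Finset.range k, (φ t (θ^[j * t] x) / t - φbar x)) atTop (nhds (c - φbar x)) := by
    refine (hc.sub tendsto_const_nhds).congr' ?_
    filter_upwards [eventually_ge_atTop 1] with k hk
    exact (hrew k hk).symm
  refine ⟨c - φbar x, ?_, htend⟩
  -- nonnegativity
  have hmulT : Tendsto (fun k : ℕ => k * t) atTop atTop :=
    tendsto_atTop_mono (fun k => Nat.le_mul_of_pos_right k (by omega)) tendsto_id
  have hlow : Tendsto (fun k : ℕ => φ (k * t) x / ((k * t : ℕ) : ℝ) - φbar x) atTop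
      (nhds 0) := by
    have := (hlx.comp hmulT).sub (tendsto_const_nhds (x := φbar x))
    simpa using this
  have hineq : ∀ᶠ k : ℕ in atTop,
      φ (k * t) x / ((k * t : ℕ) : ℝ) - φbar x ≤
        (1 / (k : ℝ)) * ∑ j ∈ Finset.range k, (φ t (θ^[j * t] x) / t - φbar x) := by
    filter_upwards [eventually_ge_atTop 1] with k hk
    rw [hrew k hk, hBsum]
    have hk0 : (0:ℝ) < k := by exact_mod_cast Nat.lt_of_lt_of_le Nat.zero_lt_one hk
    have h1 : φ (k * t) x ≤ ∑ j ∈ Finset.range k, φ t (θ^[j * t] x) := hcx k hk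
    have h2 : ∑ j ∈ Finset.range k, φ t (θ^[j * t] x) / t
        = (∑ j ∈ Finset.range k, φ t (θ^[j * t] x)) / t := by
      rw [Finset.sum_div]
    have h3 : φ (k * t) x / ((k * t : ℕ) : ℝ) ≤
        (1 / (k : ℝ)) * ((∑ j ∈ Finset.range k, φ t (θ^[j * t] x)) / t) := by
      push_cast
      rw [div_le_iff₀ (by positivity)]
      calc φ (k * t) x ≤ ∑ j ∈ Finset.range k, φ t (θ^[j * t] x) := h1
        _ = 1 / (k:ℝ) * ((∑ j ∈ Finset.range k, φ t (θ^[j * t] x)) / t) * ((k:ℝ) * t) := by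
            field_simp
    rw [h2]
    linarith
  have h0 : (0:ℝ) ≤ c - φbar x := le_of_tendsto_of_tendsto hlow htend hineq
  linarith
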